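/- arXiv:2105.02131 — 3 statements merged into one kernel-verified Lean document; each statement's English description precedes it below -/
import Mathlib

section
/- If T is a bounded linear operator on a Banach space with p(T) = q(T) = p < ∞, then X = ker(Tᵖ) ⊕ range(Tᵖ), and in particular range(Tᵖ) is closed. -/
open Filter Set
open LinearMap (ker)

variable {X Y : Type*} [NormedAddCommGroup X] [NormedSpace ℂ X]
  [NormedAddCommGroup Y] [NormedSpace ℂ Y]

/-- `T` has the single-valued extension property at `l0`. -/
def HasSVEPAt (T : X →L[ℂ] X) (l0 : ℂ) : Prop :=
  ∀ U : Set ℂ, IsOpen U → l0 ∈ U → ∀ f : ℂ → X, AnalyticOnNhd ℂ f U →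
    (∀ μ ∈ U, (T - μ • (1 : X →L[ℂ] X)) (f μ) = 0) → ∀ μ ∈ U, f μ = 0

/-- Fredholm: finite-dimensional kernel, closed range of finite codimension. -/
def IsFredholmOp (T : X →L[ℂ] X) : Prop :=
  FiniteDimensional ℂ (ker (T : X →ₗ[ℂ] X)) ∧ IsClosed ((LinearMap.range (T : X →ₗ[ℂ] X) : Submodule ℂ X) : Set X) ∧
    FiniteDimensional ℂ (X ⧸ LinearMap.range (T : X →ₗ[ℂ] X))

/-- finite ascent -/
def FiniteAscent (T : X →L[ℂ] X) : Prop := ∃ n : ℕ, ker ((T ^ n : X →L[ℂ] X) : X →ₗ[ℂ] X) = ker ((T ^ (n + 1) : X →L[ℂ] X) : X →ₗ[ℂ] X)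

/-- finite descent -/
def FiniteDescent (T : X →L[ℂ] X) : Prop :=
  ∃ n : ℕ, LinearMap.range ((T ^ n : X →L[ℂ] X) : X →ₗ[ℂ] X) = LinearMap.range ((T ^ (n + 1) : X →L[ℂ] X) : X →ₗ[ℂ] X)

/-- essential spectrum -/
def essSpec (T : X →L[ℂ] X) : Set ℂ := {l | ¬ IsFredholmOp (T - l • 1)}

/-- Browder spectrum -/
def browderSpec (T : X →L[ℂ] X) : Set ℂ :=
  {l | ¬ (IsFredholmOp (T - l • 1) ∧ FiniteAscent (T - l • 1) ∧ FiniteDescent (T - l • 1))}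

/-- the Banach-space dual (adjoint) operator -/
noncomputable def dualOp (T : X →L[ℂ] X) :
    StrongDual ℂ X →L[ℂ] StrongDual ℂ X :=
  (ContinuousLinearMap.compSL X X ℂ (RingHom.id ℂ) (RingHom.id ℂ)).flip T

/-- If `p(T) = q(T) = p < ∞`, then `X = ker (T ^ p) ⊕ range (T ^ p)`, and in
particular `range (T ^ p)` is closed. -/
theorem stmt_5 [CompleteSpace X] (T : X →L[ℂ] X) (p : ℕ)
    (hp : IsLeast {n : ℕ | ker ((T ^ n : X →L[ℂ] X) : X →ₗ[ℂ] X) = ker ((T ^ (n + 1) : X →L[ℂ] X) : X →ₗ[ℂ] X)} p)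
    (hq : IsLeast {n : ℕ | LinearMap.range ((T ^ n : X →L[ℂ] X) : X →ₗ[ℂ] X) = LinearMap.range ((T ^ (n + 1) : X →L[ℂ] X) : X →ₗ[ℂ] X)} p) :
    IsCompl (ker ((T ^ p : X →L[ℂ] X) : X →ₗ[ℂ] X)) (LinearMap.range ((T ^ p : X →L[ℂ] X) : X →ₗ[ℂ] X)) ∧
      IsClosed ((LinearMap.range ((T ^ p : X →L[ℂ] X) : X →ₗ[ℂ] X) : Submodule ℂ X) : Set X) := by
  obtain ⟨hp1, -⟩ := hp
  obtain ⟨hq1, -⟩ := hq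
  simp only [Set.mem_setOf_eq] at hp1 hq1
  have mulapp : ∀ (A B : X →L[ℂ] X) (x : X), (A * B) x = A (B x) := fun _ _ _ => rfl
  have hkp : ∀ y : X, (T ^ p) y = 0 ↔ (T ^ (p + 1)) y = 0 := by
    intro y
    have h : y ∈ ker ((T ^ p : X →L[ℂ] X) : X →ₗ[ℂ] X) ↔ y ∈ ker ((T ^ (p + 1) : X →L[ℂ] X) : X →ₗ[ℂ] X) := by rw [hp1]
    exact h
  have hrp : ∀ y : X, y ∈ LinearMap.range ((T ^ (p + 1) : X →L[ℂ] X) : X →ₗ[ℂ] X) ↔ y ∈ LinearMap.range ((T ^ p : X →L[ℂ] X) : X →ₗ[ℂ] X) := by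
    intro y; rw [hq1]
  have hker : ∀ k (x : X), (T ^ (p + k)) x = 0 ↔ (T ^ p) x = 0 := by
    intro k
    induction k with
    | zero => simp
    | succ k ih =>
      intro x
      have e1 : (T ^ (p + (k + 1))) x = (T ^ (p + k)) (T x) := by
        rw [show p + (k + 1) = (p + k) + 1 from rfl, pow_succ, mulapp]
      have e2 : (T ^ p) (T x) = (T ^ (p + 1)) x := by
        rw [pow_succ, mulapp]
      rw [e1, ih (T x), e2, ← hkp x]
  have hrange : ∀ k (x : X),
      x ∈ LinearMap.range ((T ^ (p + k) : X →L[ℂ] X) : X →ₗ[ℂ] X) ↔ x ∈ LinearMap.range ((T ^ p : X →L[ℂ] X) : X →ₗ[ℂ] X) := by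
    intro k
    induction k with
    | zero => simp
    | succ k ih =>
      intro x
      constructor
      · rintro ⟨y, rfl⟩
        have e1 : (T ^ (p + (k + 1))) y = T ((T ^ (p + k)) y) := by
          rw [show p + (k + 1) = (p + k) + 1 from rfl, pow_succ', mulapp]
        rw [ContinuousLinearMap.coe_coe, e1]
        obtain ⟨z, hz⟩ := (ih ((T ^ (p + k)) y)).mp ⟨y, rfl⟩
        rw [← hz]
        refine (hrp _).mp ⟨z, ?_⟩
        rw [ContinuousLinearMap.coe_coe, pow_succ', mulapp]
        rfl
      · intro hx
        obtain ⟨z, hz⟩ := (hrp x).mpr hx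
        have hz' : T ((T ^ p) z) = x := by rw [← hz, ContinuousLinearMap.coe_coe, pow_succ', mulapp]
        obtain ⟨w, hw⟩ := (ih _).mpr (⟨z, rfl⟩ : (T ^ p) z ∈ LinearMap.range ((T ^ p : X →L[ℂ] X) : X →ₗ[ℂ] X))
        refine ⟨w, ?_⟩
        have : (T ^ (p + (k + 1))) w = T ((T ^ (p + k)) w) := by
          rw [show p + (k + 1) = (p + k) + 1 from rfl, pow_succ', mulapp]
        rw [ContinuousLinearMap.coe_coe] at hw
        rw [ContinuousLinearMap.coe_coe, this, hw, hz']
  set N := ker ((T ^ p : X →L[ℂ] X) : X →ₗ[ℂ] X) with hN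
  set M := LinearMap.range ((T ^ p : X →L[ℂ] X) : X →ₗ[ℂ] X) with hM
  have hdisj : ∀ x : X, x ∈ N → x ∈ M → x = 0 := by
    rintro x hx ⟨y, rfl⟩
    have h2p : (T ^ (p + p)) y = 0 := by
      rw [pow_add, mulapp]; exact hx
    exact (hker p y).mp h2p
  have hsum : ∀ x : X, ∃ n ∈ N, ∃ m ∈ M, n + m = x := by
    intro x
    obtain ⟨y, hy⟩ := (hrange p ((T ^ p) x)).mpr ⟨x, rfl⟩
    refine ⟨x - (T ^ p) y, ?_, (T ^ p) y, ⟨y, rfl⟩, by abel⟩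
    have : (T ^ p) (x - (T ^ p) y) = 0 := by
      rw [ContinuousLinearMap.coe_coe] at hy
      rw [map_sub, ← mulapp, ← pow_add, hy, sub_self]
    exact this
  have hcompl : IsCompl N M := by
    constructor
    · exact Submodule.disjoint_def.mpr hdisj
    · rw [codisjoint_iff, eq_top_iff]
      intro x _
      obtain ⟨n, hn, m, hm, hx⟩ := hsum x
      rw [← hx]
      exact Submodule.add_mem_sup hn hm
  have hNclosed : IsClosed (N : Set X) := ContinuousLinearMap.isClosed_ker (T ^ p)
  haveI : CompleteSpace N := hNclosed.completeSpace_coe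
  let ψ : X × N →L[ℂ] X :=
    (T ^ p).comp (ContinuousLinearMap.fst ℂ X N) +
      N.subtypeL.comp (ContinuousLinearMap.snd ℂ X N)
  have hψ : ∀ (x : X) (n : N), ψ (x, n) = (T ^ p) x + (n : X) := fun _ _ => rfl
  have hsurj : Function.Surjective ψ := by
    intro x
    obtain ⟨n, hn, m, hm, hx⟩ := hsum x
    obtain ⟨y, rfl⟩ := hm
    exact ⟨(y, ⟨n, hn⟩), by rw [hψ, add_comm]; exact hx⟩
  have hopen : IsOpenMap ψ := ψ.isOpenMap hsurj
  have hqm : Topology.IsQuotientMap ψ := hopen.isQuotientMap ψ.continuous hsurj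
  have hpre : ψ ⁻¹' (M : Set X) = Prod.snd ⁻¹' ({0} : Set N) := by
    ext ⟨x, n⟩
    simp only [Set.mem_preimage, Set.mem_singleton_iff, SetLike.mem_coe]
    rw [hψ]
    constructor
    · intro h
      have hnM : (n : X) ∈ M := by
        have := M.sub_mem h (⟨x, rfl⟩ : (T ^ p) x ∈ M)
        simpa using this
      exact Subtype.ext (hdisj n n.2 hnM)
    · rintro rfl
      rw [ZeroMemClass.coe_zero, add_zero]
      exact ⟨x, rfl⟩
  have hclosed : IsClosed (M : Set X) := by
    rw [← hqm.isClosed_preimage, hpre]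
    exact isClosed_singleton.preimage continuous_snd
  exact ⟨hcompl, hclosed⟩
end

section
/- Let T be a bounded operator on a Banach space X. If both T and its dual T* have the SVEP on the complement of the essential spectrum σₑ(T), then σₑ(T) = σ_b(T), i.e., T ∈ (Bₑ). -/
open Filter Set
open LinearMap (ker)

variable {X Y : Type*} [NormedAddCommGroup X] [NormedSpace ℂ X]
  [NormedAddCommGroup Y] [NormedSpace ℂ Y]

open Topology
open scoped ENNReal NNReal

section AuxGeneral
variable {V W : Type*} [AddCommGroup V] [Module ℂ V] [AddCommGroup W] [Module ℂ W]

/-- extension lemma: findim kernel and range imply findim domain -/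
lemma fd_of_ker_range (f : V →ₗ[ℂ] W) (h1 : FiniteDimensional ℂ (ker f))
    (h2 : FiniteDimensional ℂ (LinearMap.range f)) : FiniteDimensional ℂ V := by
  have hfg1 : ((⊤ : Submodule ℂ V).map f).FG := by
    rw [Submodule.map_top]
    exact (Submodule.fg_iff_finiteDimensional _).mpr h2
  have hfg2 : ((⊤ : Submodule ℂ V) ⊓ ker f).FG := by
    rw [top_inf_eq]
    exact (Submodule.fg_iff_finiteDimensional _).mpr h1
  exact Module.finite_def.mpr (Submodule.fg_of_fg_map_of_fg_inf_ker f hfg1 hfg2)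

end AuxGeneral

section AuxBanach
variable {E F : Type*} [NormedAddCommGroup E] [NormedSpace ℂ E] [CompleteSpace E]
  [NormedAddCommGroup F] [NormedSpace ℂ F] [CompleteSpace F]

/-- A bounded operator between Banach spaces whose range has finite codimension
has closed range. -/
lemma isClosed_range_of_fd_quot (Φ : E →L[ℂ] F)
    (hfd : FiniteDimensional ℂ (F ⧸ LinearMap.range (Φ : E →ₗ[ℂ] F))) :
    IsClosed ((LinearMap.range (Φ : E →ₗ[ℂ] F) : Submodule ℂ F) : Set F) := by
  set M : Submodule ℂ F := LinearMap.range (Φ : E →ₗ[ℂ] F) with hM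
  obtain ⟨Wc, hWc⟩ := M.exists_isCompl
  haveI := hfd
  haveI : FiniteDimensional ℂ Wc :=
    (Submodule.quotientEquivOfIsCompl M Wc hWc).finiteDimensional
  haveI : CompleteSpace Wc := FiniteDimensional.complete ℂ Wc
  set Ψ : E × Wc →L[ℂ] F :=
    Φ.comp (ContinuousLinearMap.fst ℂ E Wc) + Wc.subtypeL.comp (ContinuousLinearMap.snd ℂ E Wc)
    with hΨ
  have hΨapp : ∀ p : E × Wc, Ψ p = Φ p.1 + p.2 := fun p => rfl
  have hsurj : Function.Surjective Ψ := by
    intro y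
    have : y ∈ M ⊔ Wc := by rw [hWc.sup_eq_top]; trivial
    obtain ⟨m, hm, w, hw, rfl⟩ := Submodule.mem_sup.mp this
    obtain ⟨x, rfl⟩ := hm
    exact ⟨(x, ⟨w, hw⟩), rfl⟩
  have hopen : IsOpenMap Ψ := Ψ.isOpenMap hsurj
  have hquot : Topology.IsQuotientMap Ψ := hopen.isQuotientMap Ψ.continuous hsurj
  have hpre : Ψ ⁻¹' (M : Set F) = (Prod.snd : E × Wc → Wc) ⁻¹' {0} := by
    ext ⟨x, w⟩
    simp only [Set.mem_preimage, hΨapp, SetLike.mem_coe, Set.mem_singleton_iff]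
    constructor
    · intro hmem
      have hwM : (w : F) ∈ M := by
        have : Φ x + (w : F) - Φ x ∈ M := M.sub_mem hmem ⟨x, rfl⟩
        simpa using this
      have : (w : F) ∈ M ⊓ Wc := ⟨hwM, w.2⟩
      rw [hWc.inf_eq_bot] at this
      exact Subtype.ext (by simpa using this)
    · rintro rfl
      show Φ x + ((0 : Wc) : F) ∈ M
      rw [ZeroMemClass.coe_zero, add_zero]
      exact ⟨x, rfl⟩
  rw [← hquot.isClosed_preimage, hpre]
  exact isClosed_singleton.preimage continuous_snd

end AuxBanach

lemma range_pow_le (S : X →L[ℂ] X) {n m : ℕ} (h : n ≤ m) :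
    LinearMap.range ((S ^ m : X →L[ℂ] X) : X →ₗ[ℂ] X) ≤ LinearMap.range ((S ^ n : X →L[ℂ] X) : X →ₗ[ℂ] X) := by
  obtain ⟨k, rfl⟩ := Nat.exists_eq_add_of_le h
  rintro _ ⟨y, rfl⟩
  exact ⟨(S ^ k) y, by simp only [ContinuousLinearMap.coe_coe]; rw [← ContinuousLinearMap.mul_apply, ← pow_add]⟩

lemma fd_quot_pow (S : X →L[ℂ] X) (h : FiniteDimensional ℂ (X ⧸ LinearMap.range (S : X →ₗ[ℂ] X))) (n : ℕ) :
    FiniteDimensional ℂ (X ⧸ LinearMap.range ((S ^ n : X →L[ℂ] X) : X →ₗ[ℂ] X)) := by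
  induction n with
  | zero =>
      have : LinearMap.range ((S ^ 0 : X →L[ℂ] X) : X →ₗ[ℂ] X) = ⊤ := by
        rw [pow_zero]
        exact LinearMap.range_eq_top.mpr (fun x => ⟨x, rfl⟩)
      rw [this]
      haveI : Subsingleton (X ⧸ (⊤ : Submodule ℂ X)) :=
        Submodule.Quotient.subsingleton_iff.mpr rfl
      infer_instance
  | succ n ih =>
      set p := LinearMap.range ((S ^ (n + 1) : X →L[ℂ] X) : X →ₗ[ℂ] X) with hp
      set q := LinearMap.range ((S ^ n : X →L[ℂ] X) : X →ₗ[ℂ] X) with hq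
      -- the natural map π : X⧸p →ₗ X⧸q
      have hle : p ≤ Submodule.comap LinearMap.id q := fun x hx => range_pow_le S n.le_succ hx
      set π : (X ⧸ p) →ₗ[ℂ] (X ⧸ q) := Submodule.mapQ p q LinearMap.id hle with hπ
      -- auxiliary map ḡ : X⧸range S →ₗ X⧸p, induced by x ↦ [Sⁿ x]
      have hker : LinearMap.range (S : X →ₗ[ℂ] X) ≤ LinearMap.ker (p.mkQ.comp (S ^ n).toLinearMap) := by
        rintro _ ⟨y, rfl⟩
        simp only [LinearMap.mem_ker, LinearMap.comp_apply, Submodule.mkQ_apply,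
          ContinuousLinearMap.coe_coe, Submodule.Quotient.mk_eq_zero]
        exact ⟨y, by simp only [ContinuousLinearMap.coe_coe]; rw [← ContinuousLinearMap.mul_apply, ← pow_succ]⟩
      set g : (X ⧸ LinearMap.range (S : X →ₗ[ℂ] X)) →ₗ[ℂ] (X ⧸ p) :=
        (LinearMap.range (S : X →ₗ[ℂ] X)).liftQ (p.mkQ.comp (S ^ n).toLinearMap) hker with hg
      haveI := h
      haveI : FiniteDimensional ℂ (LinearMap.range g) := inferInstance
      have hkerπ : LinearMap.ker π ≤ LinearMap.range g := by
        intro xb hxb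
        obtain ⟨x, rfl⟩ := Submodule.mkQ_surjective p xb
        have : (x : X) ∈ q := by
          have := hxb
          simp only [LinearMap.mem_ker, hπ, Submodule.mapQ_apply, LinearMap.id_coe, id_eq,
            Submodule.mkQ_apply, Submodule.Quotient.mk_eq_zero] at this
          exact this
        obtain ⟨z, hz⟩ := this
        refine ⟨Submodule.Quotient.mk z, ?_⟩
        simp only [hg, Submodule.liftQ_apply, LinearMap.comp_apply, Submodule.mkQ_apply,
          ContinuousLinearMap.coe_coe]
        simp only [ContinuousLinearMap.coe_coe] at hz; rw [hz]
      haveI : FiniteDimensional ℂ (LinearMap.ker π) :=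
        Submodule.finiteDimensional_of_le hkerπ
      haveI : FiniteDimensional ℂ (LinearMap.range π) := by
        haveI := ih
        infer_instance
      exact fd_of_ker_range π inferInstance inferInstance

lemma range_pow_closed [CompleteSpace X] (S : X →L[ℂ] X)
    (h : FiniteDimensional ℂ (X ⧸ LinearMap.range (S : X →ₗ[ℂ] X))) (n : ℕ) :
    IsClosed ((LinearMap.range ((S ^ n : X →L[ℂ] X) : X →ₗ[ℂ] X) : Submodule ℂ X) : Set X) :=
  isClosed_range_of_fd_quot (S ^ n) (fd_quot_pow S h n)


open LinearMap (ker) in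
lemma ascent_of_svep [CompleteSpace X] (T : X →L[ℂ] X) (l : ℂ)
    (hF : IsFredholmOp (T - l • 1)) (hsvep : HasSVEPAt T l) :
    FiniteAscent (T - l • 1) := by
  by_contra hasc
  set S : X →L[ℂ] X := T - l • 1 with hS
  obtain ⟨hker, hclran, hquot⟩ := hF
  set K : ℕ → Submodule ℂ X := fun n => ker (S : X →ₗ[ℂ] X) ⊓ LinearMap.range ((S ^ n : X →L[ℂ] X) : X →ₗ[ℂ] X) with hK
  have hKle : ∀ n, K n ≤ ker (S : X →ₗ[ℂ] X) := fun n => inf_le_left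
  have hKanti : ∀ {n m : ℕ}, n ≤ m → K m ≤ K n := fun h =>
    inf_le_inf le_rfl (range_pow_le S h)
  set r : ℕ → ℕ := fun n => Module.finrank ℂ (K n) with hr
  obtain ⟨n₀, hn₀⟩ : ∃ n₀, ∀ n, r n₀ ≤ r n := by
    have hne : (Set.range r).Nonempty := ⟨r 0, 0, rfl⟩
    obtain ⟨n₀, heq⟩ := Nat.sInf_mem hne
    exact ⟨n₀, fun n => heq.le.trans (Nat.sInf_le ⟨n, rfl⟩)⟩
  have hstab : ∀ n, n₀ ≤ n → K n = K n₀ := by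
    intro n hn
    haveI : FiniteDimensional ℂ (K n₀) := Submodule.finiteDimensional_of_le (hKle n₀)
    exact Submodule.eq_of_le_of_finrank_le (hKanti hn) (hn₀ n)
  have hKnebot : ∀ n, K n ≠ ⊥ := by
    intro n hbot
    apply hasc
    refine ⟨n, le_antisymm (fun x hx => ?_) (fun x hx => ?_)⟩
    · simp only [LinearMap.mem_ker] at hx ⊢
      simp only [ContinuousLinearMap.coe_coe] at hx ⊢; rw [pow_succ', ContinuousLinearMap.mul_apply, hx, map_zero]
    · simp only [LinearMap.mem_ker] at hx ⊢
      have h1 : (S ^ n) x ∈ K n := by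
        refine Submodule.mem_inf.mpr ⟨?_, ⟨x, rfl⟩⟩
        rw [LinearMap.mem_ker, ContinuousLinearMap.coe_coe, ← ContinuousLinearMap.mul_apply, ← pow_succ']
        exact hx
      rw [hbot] at h1
      exact (Submodule.mem_bot ℂ).mp h1
  obtain ⟨x₀, hx₀K, hx₀ne⟩ := (Submodule.ne_bot_iff _).mp (hKnebot n₀)
  set Rinf : Submodule ℂ X := ⨅ n, LinearMap.range ((S ^ n : X →L[ℂ] X) : X →ₗ[ℂ] X) with hRinf
  have hKR : K n₀ ≤ Rinf := by
    rw [le_iInf_iff]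
    intro n
    rcases le_or_gt n n₀ with hcase | hcase
    · exact le_trans inf_le_right (range_pow_le S hcase)
    · exact le_of_eq_of_le (hstab n hcase.le).symm inf_le_right
  have hRcl : IsClosed (Rinf : Set X) := by
    have hcoe : (Rinf : Set X) = ⋂ n, ((LinearMap.range ((S ^ n : X →L[ℂ] X) : X →ₗ[ℂ] X) : Submodule ℂ X) : Set X) := by
      rw [hRinf]
      exact Submodule.coe_iInf _
    rw [hcoe]
    exact isClosed_iInter fun n => range_pow_closed S hquot n
  haveI : CompleteSpace Rinf := hRcl.completeSpace_coe
  have hmaps : ∀ x : X, x ∈ Rinf → S x ∈ Rinf := by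
    intro x hx
    rw [Submodule.mem_iInf]
    intro n
    match n with
    | 0 => exact ⟨S x, by rw [pow_zero]; rfl⟩
    | Nat.succ n =>
      obtain ⟨z, rfl⟩ := (Submodule.mem_iInf _).mp hx n
      exact ⟨z, by simp only [ContinuousLinearMap.coe_coe]; rw [pow_succ', ContinuousLinearMap.mul_apply]⟩
  have hsurj : ∀ y ∈ Rinf, ∃ x ∈ Rinf, S x = y := by
    intro y hy
    obtain ⟨z, hz⟩ := (Submodule.mem_iInf _).mp hy (n₀ + 1)
    have hxy : S ((S ^ n₀) z) = y := by
      rw [← ContinuousLinearMap.mul_apply, ← pow_succ']; exact hz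
    refine ⟨(S ^ n₀) z, ?_, hxy⟩
    rw [Submodule.mem_iInf]
    intro n
    rcases le_or_gt n n₀ with hcase | hcase
    · exact range_pow_le S hcase ⟨z, rfl⟩
    · obtain ⟨w, hw⟩ := (Submodule.mem_iInf _).mp hy (n + 1)
      have hxny : S ((S ^ n) w) = y := by
        rw [← ContinuousLinearMap.mul_apply, ← pow_succ']; exact hw
      have hd : (S ^ n) w - (S ^ n₀) z ∈ K n₀ := by
        refine Submodule.mem_inf.mpr ⟨?_, ?_⟩
        · rw [LinearMap.mem_ker, map_sub, ContinuousLinearMap.coe_coe, hxny, hxy, sub_self]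
        · exact Submodule.sub_mem _ (range_pow_le S hcase.le ⟨w, rfl⟩) ⟨z, rfl⟩
      rw [← hstab n hcase.le] at hd
      have hd' : (S ^ n) w - (S ^ n₀) z ∈ LinearMap.range ((S ^ n : X →L[ℂ] X) : X →ₗ[ℂ] X) :=
        (Submodule.mem_inf.mp hd).2
      have hxrw : (S ^ n₀) z = (S ^ n) w - ((S ^ n) w - (S ^ n₀) z) :=
        (sub_sub_cancel _ _).symm
      rw [hxrw]
      exact Submodule.sub_mem _ ⟨w, rfl⟩ hd'
  set S' : Rinf →L[ℂ] Rinf :=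
    (S.comp Rinf.subtypeL).codRestrict Rinf (fun x => hmaps x x.2) with hS'
  have hS'coe : ∀ v : Rinf, (S' v : X) = S v := fun v => rfl
  have hS'surj : Function.Surjective S' := by
    intro y
    obtain ⟨x, hxR, hxy⟩ := hsurj ↑y y.2
    exact ⟨⟨x, hxR⟩, Subtype.ext (by rw [hS'coe]; exact hxy)⟩
  obtain ⟨C, hCpos, hC⟩ := S'.exists_preimage_norm_le hS'surj
  set g : Rinf → Rinf := fun v => (hC v).choose with hg
  have hg1 : ∀ v, S' (g v) = v := fun v => (hC v).choose_spec.1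
  have hg2 : ∀ v, ‖g v‖ ≤ C * ‖v‖ := fun v => (hC v).choose_spec.2
  set a₀ : Rinf := ⟨x₀, hKR hx₀K⟩ with ha₀
  set u : ℕ → X := fun n => ↑(g^[n] a₀) with hu
  have hu0 : u 0 = x₀ := rfl
  have hustep : ∀ n, S (u (n + 1)) = u n := by
    intro n
    have : u (n + 1) = ↑(g (g^[n] a₀)) := by
      rw [hu]; simp only [Function.iterate_succ_apply']
    rw [this, ← hS'coe, hg1]
  have hSu0 : S (u 0) = 0 := by
    rw [hu0]
    exact LinearMap.mem_ker.mp (hKle n₀ hx₀K)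
  set B : ℝ := max C 1 with hB
  have hB1 : (1:ℝ) ≤ B := le_max_right _ _
  have hB0 : (0:ℝ) < B := lt_of_lt_of_le one_pos hB1
  have hub : ∀ n, ‖u n‖ ≤ B ^ n * ‖u 0‖ := by
    intro n
    induction n with
    | zero => simp
    | succ n ih =>
      have hstepb : ‖u (n + 1)‖ ≤ C * ‖u n‖ := by
        have h2 := hg2 (g^[n] a₀)
        have : u (n + 1) = ↑(g (g^[n] a₀)) := by
          rw [hu]; simp only [Function.iterate_succ_apply']
        rw [this]
        exact h2
      calc ‖u (n+1)‖ ≤ C * ‖u n‖ := hstepb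
        _ ≤ B * (B ^ n * ‖u 0‖) :=
            mul_le_mul (le_max_left _ _) ih (norm_nonneg _) (le_of_lt hB0)
        _ = B ^ (n+1) * ‖u 0‖ := by ring
  -- summability
  have hsummable : ∀ z : ℂ, ‖z‖ < (2*B)⁻¹ → Summable (fun n : ℕ => z ^ n • u n) := by
    intro z hz
    apply Summable.of_norm_bounded (g := fun n => ‖u 0‖ * (‖z‖ * B) ^ n)
    · apply Summable.mul_left
      apply summable_geometric_of_lt_one (by positivity)
      have h1 : ‖z‖ * B < (2*B)⁻¹ * B := by
        exact mul_lt_mul_of_pos_right hz hB0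
      have h2 : (2*B)⁻¹ * B = 2⁻¹ := by
        rw [mul_inv, mul_assoc, inv_mul_cancel₀ (ne_of_gt hB0), mul_one]
      rw [h2] at h1
      linarith
    · intro n
      rw [norm_smul, norm_pow]
      calc ‖z‖^n * ‖u n‖ ≤ ‖z‖^n * (B^n * ‖u 0‖) :=
            mul_le_mul_of_nonneg_left (hub n) (by positivity)
        _ = ‖u 0‖ * (‖z‖ * B)^n := by ring
  set f : ℂ → X := fun μ => ∑' n : ℕ, (μ - l) ^ n • u n with hf
  set p : FormalMultilinearSeries ℂ ℂ X :=
    fun n => ContinuousMultilinearMap.mkPiRing ℂ (Fin n) (u n) with hp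
  set rn : NNReal := Real.toNNReal ((2*B)⁻¹) with hrn
  have hrn_coe : (rn : ℝ) = (2*B)⁻¹ := Real.coe_toNNReal _ (by positivity)
  have hrn_pos : 0 < rn := Real.toNNReal_pos.mpr (by positivity)
  have hrle : (rn : ℝ≥0∞) ≤ p.radius := by
    apply FormalMultilinearSeries.le_radius_of_bound _ ‖u 0‖
    intro n
    have hpn : ‖p n‖ = ‖u n‖ := by
      simp only [hp]
      exact ContinuousMultilinearMap.norm_mkPiRing (u n)
    rw [hpn]
    calc ‖u n‖ * (rn:ℝ)^n ≤ (B^n * ‖u 0‖) * ((2*B)⁻¹)^n := by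
          rw [hrn_coe]
          exact mul_le_mul_of_nonneg_right (hub n) (by positivity)
      _ = ‖u 0‖ * (B * (2*B)⁻¹)^n := by ring
      _ ≤ ‖u 0‖ * 1 := by
          apply mul_le_mul_of_nonneg_left _ (norm_nonneg _)
          apply pow_le_one₀ (by positivity)
          rw [mul_inv, ← mul_assoc, mul_comm B 2⁻¹, mul_assoc,
            mul_inv_cancel₀ (ne_of_gt hB0)]
          norm_num
      _ = ‖u 0‖ := mul_one _
  have hball : HasFPowerSeriesOnBall f p l rn := by
    refine ⟨hrle, ?_, ?_⟩
    · exact_mod_cast ENNReal.coe_pos.mpr hrn_pos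
    · intro y hy
      have hynorm : ‖y‖ < (2*B)⁻¹ := by
        rw [mem_emetric_ball_zero_iff] at hy
        have := ENNReal.coe_lt_coe.mp hy
        rw [← hrn_coe]
        exact_mod_cast this
      have hsum := (hsummable y hynorm).hasSum
      have hpn : (fun n => p n fun _ => y) = fun n : ℕ => y ^ n • u n := by
        funext n
        rw [hp]
        simp [ContinuousMultilinearMap.mkPiRing_apply]
      rw [hpn, hf]
      simp only [add_sub_cancel_left]
      exact hsum
  have hU : IsOpen (EMetric.ball l (rn : ℝ≥0∞)) := EMetric.isOpen_ball
  have hlU : l ∈ EMetric.ball l (rn:ℝ≥0∞) :=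
    EMetric.mem_ball_self (by exact_mod_cast ENNReal.coe_pos.mpr hrn_pos)
  have han : AnalyticOnNhd ℂ f (EMetric.ball l (rn:ℝ≥0∞)) := hball.analyticOnNhd
  have hcond : ∀ μ ∈ EMetric.ball l (rn:ℝ≥0∞), (T - μ • (1:X→L[ℂ]X)) (f μ) = 0 := by
    intro μ hμ
    have hznorm : ‖μ - l‖ < (2*B)⁻¹ := by
      replace hμ : edist μ l < (rn:ℝ≥0∞) := hμ
      rw [edist_eq_enorm_sub, enorm_eq_nnnorm] at hμ
      have := ENNReal.coe_lt_coe.mp hμ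
      rw [← hrn_coe]
      exact_mod_cast this
    set z : ℂ := μ - l with hz
    have hs := hsummable z hznorm
    have hTμ : T - μ • (1:X→L[ℂ]X) = S - z • 1 := by
      rw [hS, hz, sub_smul]
      abel
    rw [hTμ, ContinuousLinearMap.sub_apply]
    have hfμ : f μ = ∑' n : ℕ, z ^ n • u n := rfl
    have hSf : S (f μ) = ∑' n : ℕ, z ^ n • S (u n) := by
      rw [hfμ, S.map_tsum hs]
      exact tsum_congr fun n => by rw [map_smul]
    have hsum2 : Summable (fun n : ℕ => z ^ n • S (u n)) := by
      have heq : (fun n : ℕ => z ^ n • S (u n)) = fun n => S (z ^ n • u n) :=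
        funext fun n => (map_smul S _ _).symm
      rw [heq]
      exact hs.map S S.continuous
    have hshift : S (f μ) = z • f μ := by
      rw [hSf, hsum2.tsum_eq_zero_add]
      simp only [pow_zero, one_smul, hSu0, zero_add]
      have hterm : ∀ n : ℕ, z ^ (n+1) • S (u (n+1)) = z • (z ^ n • u n) := by
        intro n
        rw [hustep n, pow_succ', mul_smul]
      rw [tsum_congr hterm, hfμ]
      exact ((z • (1:X→L[ℂ]X)).map_tsum hs).symm.trans (by
        simp only [ContinuousLinearMap.smul_apply, ContinuousLinearMap.one_apply])
    rw [hshift, ContinuousLinearMap.smul_apply, ContinuousLinearMap.one_apply, sub_self]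
  have hzero := hsvep _ hU hlU f han hcond l hlU
  apply hx₀ne
  have hfl : f l = u 0 := by
    rw [hf]
    simp only [sub_self]
    rw [tsum_eq_single 0 (fun n hn => by rw [zero_pow hn, zero_smul])]
    rw [pow_zero, one_smul]
  rw [hfl, hu0] at hzero
  exact hzero


lemma dualOp_apply (T : X →L[ℂ] X) (g : StrongDual ℂ X) : dualOp T g = g.comp T := rfl

lemma dualOp_sub_smul_one (T : X →L[ℂ] X) (l : ℂ) :
    dualOp (T - l • 1) = dualOp T - l • 1 := by
  ext g x
  simp only [dualOp_apply, ContinuousLinearMap.coe_comp', Function.comp_apply,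
    ContinuousLinearMap.sub_apply, ContinuousLinearMap.smul_apply,
    ContinuousLinearMap.one_apply, map_sub]
  rw [map_smul]

lemma dualOp_mul (A B : X →L[ℂ] X) : dualOp (A * B) = dualOp B * dualOp A := by
  ext g x
  rfl

lemma dualOp_one : dualOp (1 : X →L[ℂ] X) = 1 := by
  ext g x
  rfl

set_option synthInstance.maxHeartbeats 400000 in
lemma dualOp_pow (S : X →L[ℂ] X) (n : ℕ) : dualOp (S ^ n) = (dualOp S) ^ n := by
  induction n with
  | zero => simpa using dualOp_one
  | succ n ih => rw [pow_succ, dualOp_mul, ih, pow_succ']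

open LinearMap (ker) in
lemma dual_surj_of_vanish [CompleteSpace X] (S : X →L[ℂ] X)
    (hclran : IsClosed ((LinearMap.range (S : X →ₗ[ℂ] X) : Submodule ℂ X) : Set X))
    (h : StrongDual ℂ X) (hh : ∀ x ∈ ker (S : X →ₗ[ℂ] X), h x = 0) :
    ∃ g : StrongDual ℂ X, g.comp S = h := by
  set M : Submodule ℂ X := LinearMap.range (S : X →ₗ[ℂ] X) with hM
  haveI : CompleteSpace M := hclran.completeSpace_coe
  set S₁ : X →L[ℂ] M := S.codRestrict M (fun x => ⟨x, rfl⟩) with hS₁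
  have hsurj : Function.Surjective S₁ := by
    rintro ⟨y, x, rfl⟩
    exact ⟨x, rfl⟩
  obtain ⟨c, hc0, hc⟩ := S₁.exists_preimage_norm_le hsurj
  set pre : M → X := fun y => (hc y).choose with hpre
  have hpre1 : ∀ y, S₁ (pre y) = y := fun y => (hc y).choose_spec.1
  have hpre2 : ∀ y, ‖pre y‖ ≤ c * ‖y‖ := fun y => (hc y).choose_spec.2
  have hpreS : ∀ y : M, S (pre y) = ↑y := by
    intro y
    calc S (pre y) = ↑(S₁ (pre y)) := rfl
      _ = ↑y := by rw [hpre1]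
  have key : ∀ (x : X) (y : M), S x = ↑y → h x = h (pre y) := by
    intro x y hxy
    have hmem : x - pre y ∈ ker (S : X →ₗ[ℂ] X) := by
      rw [LinearMap.mem_ker, map_sub, ContinuousLinearMap.coe_coe, hxy, hpreS, sub_self]
    have h0 := hh _ hmem
    rw [map_sub] at h0
    exact sub_eq_zero.mp h0
  set l : M →ₗ[ℂ] ℂ :=
    { toFun := fun y => h (pre y)
      map_add' := by
        intro y₁ y₂
        show h (pre (y₁ + y₂)) = h (pre y₁) + h (pre y₂)
        have hk := key (pre y₁ + pre y₂) (y₁ + y₂)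
          (by rw [map_add, hpreS, hpreS]; rfl)
        rw [← hk, map_add]
      map_smul' := by
        intro a y
        show h (pre (a • y)) = a • h (pre y)
        have hk := key (a • pre y) (a • y) (by rw [map_smul, hpreS]; rfl)
        rw [← hk, map_smul] } with hl
  have hlb : ∀ y : M, ‖l y‖ ≤ (‖h‖ * c) * ‖y‖ := by
    intro y
    calc ‖l y‖ = ‖h (pre y)‖ := rfl
      _ ≤ ‖h‖ * ‖pre y‖ := h.le_opNorm _
      _ ≤ ‖h‖ * (c * ‖y‖) := mul_le_mul_of_nonneg_left (hpre2 y) (norm_nonneg _)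
      _ = (‖h‖ * c) * ‖y‖ := by ring
  set lC : M →L[ℂ] ℂ := LinearMap.mkContinuous l (‖h‖ * c) hlb with hlC
  obtain ⟨g, hg, -⟩ := exists_extension_norm_eq M lC
  refine ⟨g, ?_⟩
  ext x
  have h1 : g (S x) = lC ⟨S x, ⟨x, rfl⟩⟩ := hg ⟨S x, ⟨x, rfl⟩⟩
  calc (g.comp S) x = g (S x) := rfl
    _ = lC ⟨S x, ⟨x, rfl⟩⟩ := h1
    _ = h (pre ⟨S x, ⟨x, rfl⟩⟩) := rfl
    _ = h x := (key x ⟨S x, ⟨x, rfl⟩⟩ rfl).symm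

open LinearMap (ker) in
lemma dual_fredholm [CompleteSpace X] (S : X →L[ℂ] X) (hF : IsFredholmOp S) :
    IsFredholmOp (dualOp S) := by
  obtain ⟨hker, hclran, hquot⟩ := hF
  haveI := hker
  haveI := hquot
  have hrange_eq : ∀ g : StrongDual ℂ X,
      g ∈ LinearMap.range (dualOp S : StrongDual ℂ X →ₗ[ℂ] StrongDual ℂ X) ↔ ∀ x ∈ ker (S : X →ₗ[ℂ] X), g x = 0 := by
    intro g
    constructor
    · rintro ⟨h', rfl⟩ x hx
      show h' (S x) = 0
      rw [show S x = 0 from LinearMap.mem_ker.mp hx, map_zero]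
    · intro hg
      obtain ⟨g', hg'⟩ := dual_surj_of_vanish S hclran g hg
      exact ⟨g', hg'⟩
  refine ⟨?_, ?_, ?_⟩
  · -- kernel finite-dimensional
    have hmk : ∀ g : ker (dualOp S : StrongDual ℂ X →ₗ[ℂ] StrongDual ℂ X), LinearMap.range (S : X →ₗ[ℂ] X) ≤ LinearMap.ker
        ((g : StrongDual ℂ X) : X →ₗ[ℂ] ℂ) := by
      rintro g _ ⟨x, rfl⟩
      have hg0 : (g : StrongDual ℂ X).comp S = 0 := LinearMap.mem_ker.mp g.2
      show (g : StrongDual ℂ X) (S x) = 0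
      calc (g : StrongDual ℂ X) (S x) = ((g : StrongDual ℂ X).comp S) x := rfl
        _ = 0 := by rw [hg0]; rfl
    set Φ : ker (dualOp S : StrongDual ℂ X →ₗ[ℂ] StrongDual ℂ X) →ₗ[ℂ] Module.Dual ℂ (X ⧸ LinearMap.range (S : X →ₗ[ℂ] X)) :=
      { toFun := fun g => (LinearMap.range (S : X →ₗ[ℂ] X)).liftQ
          ((g : StrongDual ℂ X) : X →ₗ[ℂ] ℂ) (hmk g)
        map_add' := by
          intro g₁ g₂
          apply LinearMap.ext
          intro q
          obtain ⟨x, rfl⟩ := Submodule.Quotient.mk_surjective _ q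
          rfl
        map_smul' := by
          intro a g
          apply LinearMap.ext
          intro q
          obtain ⟨x, rfl⟩ := Submodule.Quotient.mk_surjective _ q
          rfl } with hΦ
    have hinj : Function.Injective Φ := by
      intro g₁ g₂ hgg
      apply Subtype.ext
      apply ContinuousLinearMap.ext
      intro x
      have h1 : Φ g₁ (Submodule.Quotient.mk x) = Φ g₂ (Submodule.Quotient.mk x) := by rw [hgg]
      exact h1
    exact FiniteDimensional.of_injective Φ hinj
  · -- closed range
    have hset : (LinearMap.range (dualOp S : StrongDual ℂ X →ₗ[ℂ] StrongDual ℂ X) : Set (StrongDual ℂ X)) =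
        ⋂ x ∈ ker (S : X →ₗ[ℂ] X), {g : StrongDual ℂ X | g x = 0} := by
      ext g
      simp only [SetLike.mem_coe, Set.mem_iInter, Set.mem_setOf_eq, hrange_eq g]
    rw [hset]
    apply isClosed_biInter
    intro x hx
    exact isClosed_eq (ContinuousLinearMap.apply ℂ ℂ x).continuous continuous_const
  · -- quotient finite-dimensional
    set ρ : StrongDual ℂ X →ₗ[ℂ] Module.Dual ℂ (ker (S : X →ₗ[ℂ] X)) :=
      { toFun := fun g => (g : X →ₗ[ℂ] ℂ).domRestrict (ker (S : X →ₗ[ℂ] X))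
        map_add' := by intro g₁ g₂; ext y; rfl
        map_smul' := by intro a g; ext y; rfl } with hρ
    have hle : LinearMap.range (dualOp S : StrongDual ℂ X →ₗ[ℂ] StrongDual ℂ X) ≤ LinearMap.ker ρ := by
      rintro _ ⟨h', rfl⟩
      apply LinearMap.mem_ker.mpr
      apply LinearMap.ext
      rintro ⟨y, hy⟩
      show h' (S y) = 0
      rw [show S y = 0 from LinearMap.mem_ker.mp hy, map_zero]
    have hkerρ : LinearMap.ker ρ ≤ LinearMap.range (dualOp S : StrongDual ℂ X →ₗ[ℂ] StrongDual ℂ X) := by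
      intro g hg
      rw [hrange_eq g]
      intro x hx
      have := congrArg (fun F => F (⟨x, hx⟩ : ker (S : X →ₗ[ℂ] X))) (LinearMap.mem_ker.mp hg)
      simpa [hρ] using this
    set π := (LinearMap.range (dualOp S : StrongDual ℂ X →ₗ[ℂ] StrongDual ℂ X)).liftQ ρ hle with hπ
    have hinj : Function.Injective π := by
      rw [← LinearMap.ker_eq_bot]
      exact Submodule.ker_liftQ_eq_bot _ _ _ hkerρ
    exact FiniteDimensional.of_injective π hinj

open LinearMap (ker) in
lemma descent_of_dual_ascent [CompleteSpace X] (S : X →L[ℂ] X)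
    (hcl : ∀ n : ℕ, IsClosed ((LinearMap.range ((S ^ n : X →L[ℂ] X) : X →ₗ[ℂ] X) : Submodule ℂ X) : Set X))
    (ha : FiniteAscent (dualOp S)) : FiniteDescent S := by
  obtain ⟨n, hn⟩ := ha
  refine ⟨n, le_antisymm ?_ (range_pow_le S n.le_succ)⟩
  intro x hx
  by_contra hxmem
  set P : Submodule ℂ X := LinearMap.range ((S ^ (n+1) : X →L[ℂ] X) : X →ₗ[ℂ] X) with hP
  haveI : IsClosed (P : Set X) := hcl (n+1)
  have hxq : (Submodule.Quotient.mk x : X ⧸ P) ≠ 0 := by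
    rw [Ne, Submodule.Quotient.mk_eq_zero]
    exact hxmem
  obtain ⟨gq, hgqnorm, hgqx⟩ := exists_dual_vector ℂ (Submodule.Quotient.mk x : X ⧸ P) (norm_ne_zero_iff.mpr hxq)
  set mkC : X →L[ℂ] (X ⧸ P) := LinearMap.mkContinuous P.mkQ 1 (fun m => by
    rw [one_mul]
    exact Submodule.Quotient.norm_mk_le _ m) with hmkC
  set g : StrongDual ℂ X := gq.comp mkC with hgdef
  have hgmem : g ∈ ker (((dualOp S) ^ (n+1) : StrongDual ℂ X →L[ℂ] StrongDual ℂ X) : StrongDual ℂ X →ₗ[ℂ] StrongDual ℂ X) := by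
    rw [LinearMap.mem_ker, ← dualOp_pow]
    apply ContinuousLinearMap.ext
    intro y
    show g ((S ^ (n+1)) y) = 0
    have hmk0 : mkC ((S ^ (n+1)) y) = 0 := by
      show (Submodule.Quotient.mk ((S ^ (n+1)) y) : X ⧸ P) = 0
      rw [Submodule.Quotient.mk_eq_zero]
      exact ⟨y, rfl⟩
    calc g ((S ^ (n+1)) y) = gq (mkC ((S ^ (n+1)) y)) := rfl
      _ = 0 := by rw [hmk0, map_zero]
  rw [← hn] at hgmem
  obtain ⟨w, hw⟩ := hx
  have hgx0 : g x = 0 := by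
    have h0 : dualOp (S ^ n) g = 0 := by
      rw [dualOp_pow]
      exact LinearMap.mem_ker.mp hgmem
    have h1 : g ((S ^ n) w) = 0 := by
      calc g ((S ^ n) w) = (dualOp (S ^ n) g) w := rfl
        _ = 0 := by rw [h0]; rfl
    simp only [ContinuousLinearMap.coe_coe] at hw; rwa [hw] at h1
  have hgx : g x = gq (Submodule.Quotient.mk x) := rfl
  rw [hgx, hgqx] at hgx0
  exact hxq (norm_eq_zero.mp (Complex.ofReal_eq_zero.mp hgx0))

/-- If `T` and its dual `T*` both have the SVEP at every point outside the
essential spectrum, then `σₑ(T) = σ_b(T)`. -/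
theorem stmt_13 [CompleteSpace X] (T : X →L[ℂ] X)
    (h : ∀ l : ℂ, l ∉ essSpec T → HasSVEPAt T l ∧ HasSVEPAt (dualOp T) l) :
    essSpec T = browderSpec T := by
  ext l
  constructor
  · exact fun hl hcontra => hl hcontra.1
  · intro hb
    by_contra hess
    apply hb
    have hF : IsFredholmOp (T - l • 1) := not_not.mp hess
    obtain ⟨hsvep1, hsvep2⟩ := h l hess
    have hasc := ascent_of_svep T l hF hsvep1
    have hcl : ∀ n : ℕ,
        IsClosed ((LinearMap.range (((T - l • 1) ^ n : X →L[ℂ] X) : X →ₗ[ℂ] X) : Submodule ℂ X) : Set X) :=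
      range_pow_closed _ hF.2.2
    have hFdual : IsFredholmOp (dualOp T - l • 1) := by
      rw [← dualOp_sub_smul_one]
      exact dual_fredholm _ hF
    have hascdual : FiniteAscent (dualOp T - l • 1) :=
      ascent_of_svep (dualOp T) l hFdual hsvep2
    have hascdual' : FiniteAscent (dualOp (T - l • 1)) := by
      rw [dualOp_sub_smul_one]
      exact hascdual
    have hdesc := descent_of_dual_ascent (T - l • 1) hcl hascdual'
    exact ⟨hF, hasc, hdesc⟩
end

section
/- Let S and T be bounded operators on Banach spaces with σₑ(S) = σ_b(S) and σₑ(T) = σ_b(T). Then the direct sum satisfies σₑ(S ⊕ T) = σ_b(S ⊕ T). -/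
open Filter Set
open LinearMap (ker)

variable {X Y : Type*} [NormedAddCommGroup X] [NormedSpace ℂ X]
  [NormedAddCommGroup Y] [NormedSpace ℂ Y]

section Aux

variable {A : X →L[ℂ] X} {B : Y →L[ℂ] Y}

lemma prodMap_sub_smul (A : X →L[ℂ] X) (B : Y →L[ℂ] Y) (l : ℂ) :
    A.prodMap B - l • 1 = (A - l • 1).prodMap (B - l • 1) := by
  ext x <;> simp

lemma prodMap_pow (A : X →L[ℂ] X) (B : Y →L[ℂ] Y) (n : ℕ) :
    (A.prodMap B) ^ n = (A ^ n).prodMap (B ^ n) := by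
  induction n with
  | zero => ext x <;> simp
  | succ n ih =>
    rw [pow_succ, pow_succ, pow_succ, ih]
    ext x <;> simp [ContinuousLinearMap.mul_apply]

lemma ker_prodMapCLM (A : X →L[ℂ] X) (B : Y →L[ℂ] Y) :
    ker ((A.prodMap B : X × Y →L[ℂ] X × Y) : X × Y →ₗ[ℂ] X × Y) = (ker (A : X →ₗ[ℂ] X)).prod (ker (B : Y →ₗ[ℂ] Y)) := by
  ext x
  simp [LinearMap.mem_ker, Submodule.mem_prod, Prod.ext_iff]

lemma range_prodMapCLM (A : X →L[ℂ] X) (B : Y →L[ℂ] Y) :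
    LinearMap.range ((A.prodMap B : X × Y →L[ℂ] X × Y) : X × Y →ₗ[ℂ] X × Y) = (LinearMap.range (A : X →ₗ[ℂ] X)).prod (LinearMap.range (B : Y →ₗ[ℂ] Y)) := by
  ext x
  simp only [LinearMap.mem_range, Submodule.mem_prod]
  constructor
  · rintro ⟨y, hy⟩
    exact ⟨⟨y.1, congrArg Prod.fst hy⟩, ⟨y.2, congrArg Prod.snd hy⟩⟩
  · rintro ⟨⟨a, ha⟩, ⟨b, hb⟩⟩
    exact ⟨(a, b), Prod.ext ha hb⟩

/-- submodule product is linearly equivalent to product of submodules -/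
def subProdEquiv (p : Submodule ℂ X) (q : Submodule ℂ Y) :
    (p.prod q) ≃ₗ[ℂ] p × q where
  toFun z := (⟨z.1.1, z.2.1⟩, ⟨z.1.2, z.2.2⟩)
  invFun z := ⟨(z.1.1, z.2.1), ⟨z.1.2, z.2.2⟩⟩
  left_inv z := rfl
  right_inv z := rfl
  map_add' _ _ := rfl
  map_smul' _ _ := rfl

/-- quotient by a product submodule is the product of quotients -/
noncomputable def quotProdEquiv (p : Submodule ℂ X) (q : Submodule ℂ Y) :
    ((X × Y) ⧸ p.prod q) ≃ₗ[ℂ] (X ⧸ p) × (Y ⧸ q) := by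
  refine (Submodule.quotEquivOfEq _ _ ?_).trans
    ((p.mkQ.prodMap q.mkQ).quotKerEquivOfSurjective ?_)
  · rw [LinearMap.ker_prodMap, Submodule.ker_mkQ, Submodule.ker_mkQ]
  · rintro ⟨a, b⟩
    obtain ⟨x, hx⟩ := p.mkQ_surjective a
    obtain ⟨y, hy⟩ := q.mkQ_surjective b
    exact ⟨(x, y), Prod.ext hx hy⟩

lemma isFredholm_prodMap_iff (A : X →L[ℂ] X) (B : Y →L[ℂ] Y) :
    IsFredholmOp (A.prodMap B) ↔ IsFredholmOp A ∧ IsFredholmOp B := by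
  have hker : ker ((A.prodMap B : X × Y →L[ℂ] X × Y) : X × Y →ₗ[ℂ] X × Y) = (ker (A : X →ₗ[ℂ] X)).prod (ker (B : Y →ₗ[ℂ] Y)) := ker_prodMapCLM A B
  have hrange := range_prodMapCLM A B
  have hqe : ((X × Y) ⧸ LinearMap.range ((A.prodMap B : X × Y →L[ℂ] X × Y) : X × Y →ₗ[ℂ] X × Y)) ≃ₗ[ℂ]
      (X ⧸ LinearMap.range (A : X →ₗ[ℂ] X)) × (Y ⧸ LinearMap.range (B : Y →ₗ[ℂ] Y)) :=
    (Submodule.quotEquivOfEq _ _ hrange).trans (quotProdEquiv _ _)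
  have hke : (ker ((A.prodMap B : X × Y →L[ℂ] X × Y) : X × Y →ₗ[ℂ] X × Y) : Submodule ℂ (X × Y)) ≃ₗ[ℂ] ker (A : X →ₗ[ℂ] X) × ker (B : Y →ₗ[ℂ] Y) :=
    (LinearEquiv.ofEq _ _ hker).trans (subProdEquiv _ _)
  have hset : ((LinearMap.range ((A.prodMap B : X × Y →L[ℂ] X × Y) : X × Y →ₗ[ℂ] X × Y) : Submodule ℂ (X × Y)) : Set (X × Y)) =
      ((LinearMap.range (A : X →ₗ[ℂ] X) : Submodule ℂ X) : Set X) ×ˢ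
        ((LinearMap.range (B : Y →ₗ[ℂ] Y) : Submodule ℂ Y) : Set Y) := by
    rw [hrange]; rfl
  constructor
  · rintro ⟨h1, h2, h3⟩
    haveI := h1
    haveI := h3
    haveI h1' : FiniteDimensional ℂ (ker (A : X →ₗ[ℂ] X) × ker (B : Y →ₗ[ℂ] Y)) := hke.finiteDimensional
    haveI h3' : FiniteDimensional ℂ ((X ⧸ LinearMap.range (A : X →ₗ[ℂ] X)) × (Y ⧸ LinearMap.range (B : Y →ₗ[ℂ] Y))) :=
      hqe.finiteDimensional
    rw [hset] at h2
    have hA2 : IsClosed ((LinearMap.range (A : X →ₗ[ℂ] X) : Submodule ℂ X) : Set X) := by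
      have : ((LinearMap.range (A : X →ₗ[ℂ] X) : Submodule ℂ X) : Set X) =
          (fun x : X => (x, (0 : Y))) ⁻¹' (((LinearMap.range (A : X →ₗ[ℂ] X) : Submodule ℂ X) : Set X) ×ˢ
            ((LinearMap.range (B : Y →ₗ[ℂ] Y) : Submodule ℂ Y) : Set Y)) := by
        ext x
        simp [Submodule.zero_mem]
      rw [this]
      exact h2.preimage (continuous_id.prodMk continuous_const)
    have hB2 : IsClosed ((LinearMap.range (B : Y →ₗ[ℂ] Y) : Submodule ℂ Y) : Set Y) := by
      have : ((LinearMap.range (B : Y →ₗ[ℂ] Y) : Submodule ℂ Y) : Set Y) =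
          (fun y : Y => ((0 : X), y)) ⁻¹' (((LinearMap.range (A : X →ₗ[ℂ] X) : Submodule ℂ X) : Set X) ×ˢ
            ((LinearMap.range (B : Y →ₗ[ℂ] Y) : Submodule ℂ Y) : Set Y)) := by
        ext y
        simp [Submodule.zero_mem]
      rw [this]
      exact h2.preimage (continuous_const.prodMk continuous_id)
    exact ⟨⟨Module.Finite.of_surjective (R := ℂ) (LinearMap.fst ℂ (ker (A : X →ₗ[ℂ] X)) (ker (B : Y →ₗ[ℂ] Y)))
        Prod.fst_surjective, hA2,
        Module.Finite.of_surjective (R := ℂ)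
          (LinearMap.fst ℂ (X ⧸ LinearMap.range (A : X →ₗ[ℂ] X)) (Y ⧸ LinearMap.range (B : Y →ₗ[ℂ] Y)))
          Prod.fst_surjective⟩,
      ⟨Module.Finite.of_surjective (R := ℂ) (LinearMap.snd ℂ (ker (A : X →ₗ[ℂ] X)) (ker (B : Y →ₗ[ℂ] Y)))
        Prod.snd_surjective, hB2,
        Module.Finite.of_surjective (R := ℂ)
          (LinearMap.snd ℂ (X ⧸ LinearMap.range (A : X →ₗ[ℂ] X)) (Y ⧸ LinearMap.range (B : Y →ₗ[ℂ] Y)))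
          Prod.snd_surjective⟩⟩
  · rintro ⟨⟨hA1, hA2, hA3⟩, ⟨hB1, hB2, hB3⟩⟩
    haveI := hA1; haveI := hA3; haveI := hB1; haveI := hB3
    refine ⟨hke.symm.finiteDimensional, ?_, hqe.symm.finiteDimensional⟩
    rw [hset]
    exact hA2.prod hB2

lemma pow_succ_apply (A : X →L[ℂ] X) (j : ℕ) (x : X) :
    (A ^ (j + 1)) x = (A ^ j) (A x) := by
  rw [pow_succ]; rfl

lemma pow_succ_apply' (A : X →L[ℂ] X) (j : ℕ) (x : X) :
    (A ^ (j + 1)) x = A ((A ^ j) x) := by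
  rw [pow_succ']; rfl

lemma ker_pow_le_succ (A : X →L[ℂ] X) (m : ℕ) : ker ((A ^ m : X →L[ℂ] X) : X →ₗ[ℂ] X) ≤ ker ((A ^ (m + 1) : X →L[ℂ] X) : X →ₗ[ℂ] X) := by
  intro x hx
  simp only [LinearMap.mem_ker, ContinuousLinearMap.coe_coe] at hx ⊢
  rw [pow_succ_apply' A m x, hx, map_zero]

lemma range_pow_succ_le (A : X →L[ℂ] X) (m : ℕ) :
    LinearMap.range ((A ^ (m + 1) : X →L[ℂ] X) : X →ₗ[ℂ] X) ≤ LinearMap.range ((A ^ m : X →L[ℂ] X) : X →ₗ[ℂ] X) := by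
  rintro _ ⟨x, rfl⟩
  exact ⟨A x, (pow_succ_apply A m x).symm⟩

lemma ker_pow_stable (A : X →L[ℂ] X) {n : ℕ} (h : ker ((A ^ n : X →L[ℂ] X) : X →ₗ[ℂ] X) = ker ((A ^ (n + 1) : X →L[ℂ] X) : X →ₗ[ℂ] X))
    {m : ℕ} (hm : n ≤ m) : ker ((A ^ m : X →L[ℂ] X) : X →ₗ[ℂ] X) = ker ((A ^ (m + 1) : X →L[ℂ] X) : X →ₗ[ℂ] X) := by
  obtain ⟨k, rfl⟩ := Nat.exists_eq_add_of_le hm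
  induction k with
  | zero => exact h
  | succ k ih =>
    have e1 : n + (k + 1) = n + k + 1 := by ring
    rw [e1]
    refine le_antisymm (ker_pow_le_succ A _) ?_
    intro x hx
    simp only [LinearMap.mem_ker, ContinuousLinearMap.coe_coe] at hx ⊢
    rw [pow_succ_apply A (n + k) x]
    have h1 : (A ^ (n + k + 1)) (A x) = 0 := by
      rw [← pow_succ_apply A (n + k + 1) x]
      exact hx
    have h2 : A x ∈ ker ((A ^ (n + k) : X →L[ℂ] X) : X →ₗ[ℂ] X) := by
      rw [ih (Nat.le_add_right n k)]
      exact LinearMap.mem_ker.mpr h1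
    exact LinearMap.mem_ker.mp h2

lemma range_pow_stable (A : X →L[ℂ] X) {n : ℕ}
    (h : LinearMap.range ((A ^ n : X →L[ℂ] X) : X →ₗ[ℂ] X) = LinearMap.range ((A ^ (n + 1) : X →L[ℂ] X) : X →ₗ[ℂ] X))
    {m : ℕ} (hm : n ≤ m) : LinearMap.range ((A ^ m : X →L[ℂ] X) : X →ₗ[ℂ] X) = LinearMap.range ((A ^ (m + 1) : X →L[ℂ] X) : X →ₗ[ℂ] X) := by
  obtain ⟨k, rfl⟩ := Nat.exists_eq_add_of_le hm
  induction k with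
  | zero => exact h
  | succ k ih =>
    have e1 : n + (k + 1) = n + k + 1 := by ring
    rw [e1]
    refine le_antisymm ?_ (range_pow_succ_le A _)
    rintro _ ⟨x, rfl⟩
    have hmem : (A ^ (n + k)) x ∈ LinearMap.range ((A ^ (n + k + 1) : X →L[ℂ] X) : X →ₗ[ℂ] X) := by
      rw [← ih (Nat.le_add_right n k)]
      exact ⟨x, rfl⟩
    obtain ⟨z, hz⟩ := hmem
    refine ⟨z, ?_⟩
    simp only [ContinuousLinearMap.coe_coe] at hz ⊢
    rw [pow_succ_apply' A (n + k + 1) z, hz, ← pow_succ_apply' A (n + k) x]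

end Aux

/-- If `σₑ(S) = σ_b(S)` and `σₑ(T) = σ_b(T)`, then the direct sum satisfies
`σₑ(S ⊕ T) = σ_b(S ⊕ T)`. -/
theorem stmt_15 [CompleteSpace X] [CompleteSpace Y]
    (S : X →L[ℂ] X) (T : Y →L[ℂ] Y)
    (hS : essSpec S = browderSpec S) (hT : essSpec T = browderSpec T) :
    essSpec (S.prodMap T) = browderSpec (S.prodMap T) := by
  ext l
  simp only [essSpec, browderSpec, mem_setOf_eq]
  rw [not_iff_not]
  constructor
  · intro hF
    have hprod : S.prodMap T - l • 1 = (S - l • 1).prodMap (T - l • 1) :=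
      prodMap_sub_smul S T l
    rw [hprod] at hF ⊢
    obtain ⟨hFS, hFT⟩ := (isFredholm_prodMap_iff _ _).mp hF
    have hlS : l ∉ essSpec S := fun h => h hFS
    have hlT : l ∉ essSpec T := fun h => h hFT
    rw [hS] at hlS
    rw [hT] at hlT
    obtain ⟨-, hascS, hdesS⟩ := not_not.mp hlS
    obtain ⟨-, hascT, hdesT⟩ := not_not.mp hlT
    refine ⟨hF, ?_, ?_⟩
    · obtain ⟨a, ha⟩ := hascS
      obtain ⟨b, hb⟩ := hascT
      refine ⟨max a b, ?_⟩
      rw [prodMap_pow, prodMap_pow, ker_prodMapCLM, ker_prodMapCLM,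
        ker_pow_stable _ ha (le_max_left a b), ker_pow_stable _ hb (le_max_right a b)]
    · obtain ⟨a, ha⟩ := hdesS
      obtain ⟨b, hb⟩ := hdesT
      refine ⟨max a b, ?_⟩
      rw [prodMap_pow, prodMap_pow, range_prodMapCLM, range_prodMapCLM,
        range_pow_stable _ ha (le_max_left a b), range_pow_stable _ hb (le_max_right a b)]
  · rintro ⟨hF, -, -⟩
    exact hF
end
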